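/- Let u, ũ > 0, and suppose ũ = 1 − m/r + O(r^{−2+ε}) and |∇̃f̃|²_{g₂} = r² + 4m√(1+r²) + O(r^ε) as r → ∞. Then u := ũ √(1 + ũ² |∇̃f̃|²_{g₂}) satisfies u = √(1+r²) + O(r^{−1+ε}). -/
import Mathlib


open Filter Asymptotics

private lemma rpow_le_O {a b : ℝ} (h : a ≤ b) :
    (fun r : ℝ => r ^ a) =O[atTop] fun r : ℝ => r ^ b := by
  apply IsBigO.of_bound 1
  filter_upwards [eventually_ge_atTop (1:ℝ)] with r hr
  rw [one_mul, Real.norm_eq_abs, Real.norm_eq_abs,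
    abs_of_nonneg (Real.rpow_nonneg (by linarith) _),
    abs_of_nonneg (Real.rpow_nonneg (by linarith) _)]
  exact Real.rpow_le_rpow_of_exponent_le hr h

private lemma O_trans {f : ℝ → ℝ} {a b : ℝ} (hf : f =O[atTop] fun r : ℝ => r ^ a)
    (h : a ≤ b) : f =O[atTop] fun r : ℝ => r ^ b := hf.trans (rpow_le_O h)

private lemma O_mul {f g : ℝ → ℝ} {a b : ℝ} (hf : f =O[atTop] fun r : ℝ => r ^ a)
    (hg : g =O[atTop] fun r : ℝ => r ^ b) :
    (fun r => f r * g r) =O[atTop] fun r : ℝ => r ^ (a + b) := by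
  refine (hf.mul hg).trans (Filter.EventuallyEq.isBigO ?_)
  filter_upwards [eventually_gt_atTop (0:ℝ)] with r hr
  rw [← Real.rpow_add hr]

private lemma O_const (k : ℝ) : (fun _ : ℝ => k) =O[atTop] fun r : ℝ => r ^ (0:ℝ) := by
  apply IsBigO.of_bound |k|
  filter_upwards [eventually_ge_atTop (1:ℝ)] with r hr
  simp [Real.rpow_zero, Real.norm_eq_abs]

private lemma inv_O : (fun r : ℝ => r⁻¹) =O[atTop] fun r : ℝ => r ^ (-1:ℝ) := by
  apply Filter.EventuallyEq.isBigO
  filter_upwards [eventually_gt_atTop (0:ℝ)] with r hr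
  rw [Real.rpow_neg_one]

private lemma sqrt_O : (fun r : ℝ => Real.sqrt (1 + r ^ 2)) =O[atTop]
    fun r : ℝ => r ^ (1:ℝ) := by
  apply IsBigO.of_bound 2
  filter_upwards [eventually_ge_atTop (1:ℝ)] with r hr
  rw [Real.rpow_one, Real.norm_eq_abs, Real.norm_eq_abs,
    abs_of_nonneg (Real.sqrt_nonneg _), abs_of_nonneg (by linarith : (0:ℝ) ≤ r)]
  have h : Real.sqrt (1 + r ^ 2) ≤ Real.sqrt ((2 * r) ^ 2) :=
    Real.sqrt_le_sqrt (by nlinarith)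
  rwa [Real.sqrt_sq (by linarith)] at h

private lemma sqrt_sub_O : (fun r : ℝ => Real.sqrt (1 + r ^ 2) - r) =O[atTop]
    fun r : ℝ => r ^ (-1:ℝ) := by
  apply IsBigO.of_bound 1
  filter_upwards [eventually_ge_atTop (1:ℝ)] with r hr
  have hr0 : 0 < r := by linarith
  have hq : Real.sqrt (1 + r ^ 2) ^ 2 = 1 + r ^ 2 := Real.sq_sqrt (by positivity)
  have hrle : r ≤ Real.sqrt (1 + r ^ 2) := by
    calc r = Real.sqrt (r ^ 2) := (Real.sqrt_sq hr0.le).symm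
      _ ≤ _ := Real.sqrt_le_sqrt (by linarith)
  rw [one_mul, Real.rpow_neg_one, Real.norm_eq_abs, Real.norm_eq_abs,
    abs_of_nonneg (by linarith : (0:ℝ) ≤ Real.sqrt (1 + r ^ 2) - r),
    abs_of_nonneg (inv_nonneg.2 hr0.le), inv_eq_one_div, le_div_iff₀ hr0]
  nlinarith [mul_le_mul_of_nonneg_left (show r ≤ Real.sqrt (1 + r ^ 2) + r by linarith)
    (sub_nonneg.2 hrle)]

private lemma sq_O : (fun r : ℝ => r ^ 2) =O[atTop] fun r : ℝ => r ^ (2:ℝ) := by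
  apply Filter.EventuallyEq.isBigO
  filter_upwards with r
  rw [show (2:ℝ) = ((2:ℕ):ℝ) by norm_num, Real.rpow_natCast]

/-- Asymptotic computation (4.16): if `ũ = 1 − m/r + O(r^{−2+ε})` and
`|∇̃f̃|²_{g₂} = r² + 4m√(1+r²) + O(r^ε)`, then
`u = ũ√(1 + ũ²|∇̃f̃|²)` satisfies `u = √(1+r²) + O(r^{−1+ε})`. -/
theorem stmt16 (utld F : ℝ → ℝ) (m ε : ℝ) (hε : 0 < ε) (hε1 : ε < 1)
    (hupos : ∀ r, 0 < utld r) (hFnn : ∀ r, 0 ≤ F r)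
    (hu : (fun r => utld r - (1 - m / r)) =O[atTop] fun r : ℝ => r ^ (-2 + ε))
    (hF : (fun r => F r - (r ^ 2 + 4 * m * Real.sqrt (1 + r ^ 2))) =O[atTop]
      fun r : ℝ => r ^ ε) :
    (fun r => utld r * Real.sqrt (1 + utld r ^ 2 * F r) - Real.sqrt (1 + r ^ 2))
      =O[atTop] fun r : ℝ => r ^ (-1 + ε) := by
  -- basic O facts
  have hm : (fun r : ℝ => m / r) =O[atTop] fun r : ℝ => r ^ (-1:ℝ) := by
    simpa [div_eq_mul_inv] using inv_O.const_mul_left m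
  have ha1 : (fun r => utld r - 1) =O[atTop] fun r : ℝ => r ^ (-1:ℝ) := by
    have h := (O_trans hu (by linarith : -2 + ε ≤ -1)).sub hm
    exact h.congr_left fun r => by ring
  have ha : utld =O[atTop] fun r : ℝ => r ^ (0:ℝ) := by
    have h := (O_trans ha1 (by norm_num)).add (O_const 1)
    exact h.congr_left fun r => by ring
  have hA1 : (fun r => utld r + 1) =O[atTop] fun r : ℝ => r ^ (0:ℝ) := by
    have h := (O_trans ha1 (by norm_num)).add (O_const 2)
    exact h.congr_left fun r => by ring
  have ha2 : (fun r => utld r ^ 2) =O[atTop] fun r : ℝ => r ^ (0:ℝ) := by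
    have h := O_trans (O_mul ha ha) (by norm_num : (0:ℝ) + 0 ≤ 0)
    exact h.congr_left fun r => by ring
  have ha21 : (fun r => utld r ^ 2 + 1) =O[atTop] fun r : ℝ => r ^ (0:ℝ) :=
    (ha2.add (O_const 1))
  have ha23 : (fun r => utld r ^ 2 + 2 * utld r + 3) =O[atTop] fun r : ℝ => r ^ (0:ℝ) := by
    have h := ha2.add ((ha.const_mul_left 2).add (O_const 3))
    exact h.congr_left fun r => by ring
  have hF2 : F =O[atTop] fun r : ℝ => r ^ (2:ℝ) := by
    have h := (O_trans hF (by linarith : ε ≤ 2)).add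
      (sq_O.add (O_trans (sqrt_O.const_mul_left (4 * m)) (by norm_num : (1:ℝ) ≤ 2)))
    exact h.congr_left fun r => by ring
  -- the squared quantity G is O(r^ε)
  have hGO : (fun r => utld r ^ 2 * (1 + utld r ^ 2 * F r) - (1 + r ^ 2))
      =O[atTop] fun r : ℝ => r ^ ε := by
    have hT1 : (fun r => (utld r - 1) * (utld r + 1)) =O[atTop] fun r : ℝ => r ^ ε :=
      O_trans (O_mul ha1 hA1) (by linarith)
    have hT2a : (fun r => (utld r - (1 - m / r)) *
        ((utld r + 1) * ((utld r ^ 2 + 1) * F r))) =O[atTop] fun r : ℝ => r ^ ε :=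
      O_trans (O_mul hu (O_mul hA1 (O_mul ha21 hF2))) (by linarith)
    have hT2b : (fun r => -(m / r * ((utld r - 1) * ((utld r ^ 2 + 2 * utld r + 3) * F r))))
        =O[atTop] fun r : ℝ => r ^ ε :=
      (O_trans (O_mul hm (O_mul ha1 (O_mul ha23 hF2))) (by linarith)).neg_left
    have hT3 : (fun r => -(4 * (m / r *
        (F r - (r ^ 2 + 4 * m * Real.sqrt (1 + r ^ 2)))))) =O[atTop] fun r : ℝ => r ^ ε :=
      ((O_trans (O_mul hm hF) (by linarith)).const_mul_left 4).neg_left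
    have hT4 : (fun r => F r - (r ^ 2 + 4 * m * Real.sqrt (1 + r ^ 2)))
        =O[atTop] fun r : ℝ => r ^ ε := hF
    have hT5 : (fun r => 4 * m * (Real.sqrt (1 + r ^ 2) - r)) =O[atTop]
        fun r : ℝ => r ^ ε :=
      (O_trans sqrt_sub_O (by linarith)).const_mul_left (4 * m)
    have hT6 : (fun r => -(16 * (m / r * (m * Real.sqrt (1 + r ^ 2))))) =O[atTop]
        fun r : ℝ => r ^ ε :=
      ((O_trans (O_mul hm (sqrt_O.const_mul_left m)) (by linarith)).const_mul_left 16).neg_left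
    have hsum := hT1.add (hT2a.add (hT2b.add (hT3.add (hT4.add (hT5.add hT6)))))
    refine (Filter.EventuallyEq.trans_isBigO ?_ hsum)
    filter_upwards [eventually_gt_atTop (0:ℝ)] with r hr
    have hr0 : r ≠ 0 := hr.ne'
    field_simp
    ring
  -- pointwise identity : u - s = G / (u + s)
  have key : ∀ r : ℝ, utld r * Real.sqrt (1 + utld r ^ 2 * F r) - Real.sqrt (1 + r ^ 2) =
      (utld r ^ 2 * (1 + utld r ^ 2 * F r) - (1 + r ^ 2)) /
      (utld r * Real.sqrt (1 + utld r ^ 2 * F r) + Real.sqrt (1 + r ^ 2)) := by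
    intro r
    have hq : Real.sqrt (1 + utld r ^ 2 * F r) ^ 2 = 1 + utld r ^ 2 * F r :=
      Real.sq_sqrt (by nlinarith [hFnn r, sq_nonneg (utld r)] : (0:ℝ) ≤ 1 + utld r ^ 2 * F r)
    have hs2 : Real.sqrt (1 + r ^ 2) ^ 2 = 1 + r ^ 2 :=
      Real.sq_sqrt (by positivity : (0:ℝ) ≤ 1 + r ^ 2)
    have hs1 : (1:ℝ) ≤ Real.sqrt (1 + r ^ 2) := by
      have h := Real.sqrt_le_sqrt (show (1:ℝ) ≤ 1 + r ^ 2 by nlinarith [sq_nonneg r])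
      rwa [Real.sqrt_one] at h
    have hden : 0 < utld r * Real.sqrt (1 + utld r ^ 2 * F r) + Real.sqrt (1 + r ^ 2) := by
      have h1 : 0 ≤ utld r * Real.sqrt (1 + utld r ^ 2 * F r) :=
        mul_nonneg (hupos r).le (Real.sqrt_nonneg _)
      linarith
    rw [eq_div_iff hden.ne']
    linear_combination (utld r) ^ 2 * hq - hs2
  -- conclude
  have hbound : (fun r => utld r * Real.sqrt (1 + utld r ^ 2 * F r) - Real.sqrt (1 + r ^ 2))
      =O[atTop] fun r => (utld r ^ 2 * (1 + utld r ^ 2 * F r) - (1 + r ^ 2)) * r⁻¹ := by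
    apply IsBigO.of_bound 1
    filter_upwards [eventually_ge_atTop (1:ℝ)] with r hr
    have hr0 : 0 < r := by linarith
    have hrle : r ≤ Real.sqrt (1 + r ^ 2) := by
      calc r = Real.sqrt (r ^ 2) := (Real.sqrt_sq hr0.le).symm
        _ ≤ _ := Real.sqrt_le_sqrt (by linarith)
    have h1 : 0 ≤ utld r * Real.sqrt (1 + utld r ^ 2 * F r) :=
      mul_nonneg (hupos r).le (Real.sqrt_nonneg _)
    have hden : r ≤ utld r * Real.sqrt (1 + utld r ^ 2 * F r) + Real.sqrt (1 + r ^ 2) := by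
      linarith
    have hdpos : 0 < utld r * Real.sqrt (1 + utld r ^ 2 * F r) + Real.sqrt (1 + r ^ 2) := by
      linarith
    rw [key r, one_mul, Real.norm_eq_abs, Real.norm_eq_abs, abs_div, abs_of_pos hdpos,
      abs_mul, abs_of_nonneg (inv_nonneg.2 hr0.le), div_eq_mul_inv]
    exact mul_le_mul_of_nonneg_left (inv_anti₀ hr0 hden) (abs_nonneg _)
  refine hbound.trans ?_
  have h := O_mul hGO inv_O
  refine h.trans (Filter.EventuallyEq.isBigO ?_)
  filter_upwards with r
  rw [show ε + (-1:ℝ) = -1 + ε by ring]
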